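/- Let X be a measurable space with probability measure μ, and let p, g : X → Δ_m be measurable. Let φ : Δ_m → ℝ₊^m be proper with Q(u) = u·φ(u) α-strongly concave w.r.t. the L_q norm (as a supergradient inequality with supergradient φ). Define C(h) = E_x[ g(x)·(φ(h(x)) − φ(g(x))) ] for measurable h : X → Δ_m. If h*(x) = λ p(x) + (1−λ) g(x) with λ ∈ [0,1] satisfies C(h*) ≤ ε, and E_x[‖p(x) − g(x)‖_q²] > 0, then λ ≤ sqrt( 2ε / (α · E_x[‖p(x) − g(x)‖_q²]) ). -/
import Mathlib


open MeasureTheory Finset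

/-- Bound on the mixing coefficient λ: if Q(u) = u·φ(u) is α-strongly concave
w.r.t. the L_q norm (supergradient inequality with supergradient φ), the churn
C(h) = E_x[g(x)·(φ(h(x)) − φ(g(x)))] of h*(x) = λ p(x) + (1−λ) g(x) is at most ε,
and E_x[‖p(x) − g(x)‖_q²] > 0, then λ ≤ √(2ε / (α E_x[‖p(x) − g(x)‖_q²])). -/
theorem stmt_4 {X : Type*} [MeasurableSpace X] (μ : Measure X)
    [IsProbabilityMeasure μ] {m : ℕ} (q : ℝ) (hq : 1 ≤ q) (α ε lam : ℝ)
    (hα : 0 < α)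
    (φ : (Fin m → ℝ) → (Fin m → ℝ))
    (hφpos : ∀ z ∈ stdSimplex ℝ (Fin m), ∀ i, 0 ≤ φ z i)
    (hstrong : ∀ u ∈ stdSimplex ℝ (Fin m), ∀ v ∈ stdSimplex ℝ (Fin m),
      ∑ i, v i * φ v i ≤ ∑ i, u i * φ u i + ∑ i, (v i - u i) * φ u i
        - α / 2 * ((∑ i, |v i - u i| ^ q) ^ (1 / q)) ^ 2)
    (p g : X → Fin m → ℝ)
    (hp : ∀ x, p x ∈ stdSimplex ℝ (Fin m)) (hg : ∀ x, g x ∈ stdSimplex ℝ (Fin m))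
    (hlam : lam ∈ Set.Icc (0 : ℝ) 1)
    (hstar : X → Fin m → ℝ)
    (hhstar : ∀ x, hstar x = lam • p x + (1 - lam) • g x)
    (hIntC : Integrable (fun x => ∑ i, g x i * (φ (hstar x) i - φ (g x) i)) μ)
    (hIntq : Integrable (fun x => ((∑ i, |p x i - g x i| ^ q) ^ (1 / q)) ^ 2) μ)
    (hC : (∫ x, ∑ i, g x i * (φ (hstar x) i - φ (g x) i) ∂μ) ≤ ε)
    (hpos : 0 < ∫ x, ((∑ i, |p x i - g x i| ^ q) ^ (1 / q)) ^ 2 ∂μ) :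
    lam ≤ Real.sqrt
      (2 * ε / (α * ∫ x, ((∑ i, |p x i - g x i| ^ q) ^ (1 / q)) ^ 2 ∂μ)) := by
  have hq0 : q ≠ 0 := by linarith
  have hlam0 : 0 ≤ lam := hlam.1
  -- pointwise key inequality
  have key : ∀ x, α / 2 * lam ^ 2 * ((∑ i, |p x i - g x i| ^ q) ^ (1 / q)) ^ 2
      ≤ ∑ i, g x i * (φ (hstar x) i - φ (g x) i) := by
    intro x
    have hmem : hstar x ∈ stdSimplex ℝ (Fin m) := by
      rw [hhstar]
      exact (convex_stdSimplex ℝ (Fin m)) (hp x) (hg x) hlam0 (by linarith [hlam.2]) (by ring)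
    have h1 := hstrong (hstar x) hmem (g x) (hg x)
    -- norm computation
    have hnorm : (∑ i, |g x i - hstar x i| ^ q) ^ (1 / q)
        = lam * (∑ i, |p x i - g x i| ^ q) ^ (1 / q) := by
      have hsum : (∑ i, |g x i - hstar x i| ^ q) = lam ^ q * ∑ i, |p x i - g x i| ^ q := by
        rw [Finset.mul_sum]
        refine Finset.sum_congr rfl fun i _ => ?_
        have : |g x i - hstar x i| = lam * |p x i - g x i| := by
          rw [hhstar]
          have : g x i - (lam • p x + (1 - lam) • g x) i = lam * (g x i - p x i) := by
            simp [smul_eq_mul]; ring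
          rw [this, abs_mul, abs_of_nonneg hlam0, abs_sub_comm]
        rw [this, Real.mul_rpow hlam0 (abs_nonneg _)]
      rw [hsum, Real.mul_rpow (Real.rpow_nonneg hlam0 q)
        (Finset.sum_nonneg fun i _ => Real.rpow_nonneg (abs_nonneg _) q),
        ← Real.rpow_mul hlam0, mul_one_div_cancel hq0, Real.rpow_one]
    have hsplit : ∑ i, hstar x i * φ (hstar x) i + ∑ i, (g x i - hstar x i) * φ (hstar x) i
        = ∑ i, g x i * φ (hstar x) i := by
      rw [← Finset.sum_add_distrib]
      exact Finset.sum_congr rfl fun i _ => by ring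
    have hsub : ∑ i, g x i * (φ (hstar x) i - φ (g x) i)
        = ∑ i, g x i * φ (hstar x) i - ∑ i, g x i * φ (g x) i := by
      rw [← Finset.sum_sub_distrib]
      exact Finset.sum_congr rfl fun i _ => by ring
    rw [hnorm] at h1
    rw [hsub]
    nlinarith [h1, hsplit]
  -- integrate
  set J := ∫ x, ((∑ i, |p x i - g x i| ^ q) ^ (1 / q)) ^ 2 ∂μ with hJ
  have hint : α / 2 * lam ^ 2 * J ≤ ∫ x, ∑ i, g x i * (φ (hstar x) i - φ (g x) i) ∂μ := by
    have := integral_mono (hIntq.const_mul (α / 2 * lam ^ 2)) hIntC key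
    rwa [MeasureTheory.integral_const_mul] at this
  have hle : α / 2 * lam ^ 2 * J ≤ ε := le_trans hint hC
  have hlam2 : lam ^ 2 ≤ 2 * ε / (α * J) := by
    rw [le_div_iff₀ (by positivity)]
    nlinarith
  calc lam = Real.sqrt (lam ^ 2) := by rw [Real.sqrt_sq hlam0]
    _ ≤ _ := Real.sqrt_le_sqrt hlam2
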